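/- arXiv:2411.00176 — 3 statements merged into one kernel-verified Lean document; each statement's English description precedes it below -/
import Mathlib

section
/- Suppose the real number α satisfies |α − p/q| ≤ 1/q² for some integers p, q with q ≥ 1 and gcd(p,q)=1. Then for all positive integers H and N, the sum over k = 1 to H of min(N, 1/‖kα‖_T) is at most C·(HN/q + H·log q + N + q·log q) for an absolute constant C. -/
open Real

/-- Distance to the nearest integer. -/
noncomputable def dT (x : ℝ) : ℝ := |x - round x|

/-- `min(N, 1/x)`, interpreted as `N` when `x = 0`. -/
noncomputable def mterm (N x : ℝ) : ℝ := if x = 0 then N else min N (1 / x)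

lemma dT_nonneg (x : ℝ) : 0 ≤ dT x := abs_nonneg _

/-- `round` is a nearest integer. -/
lemma dT_le_abs_sub (x : ℝ) (n : ℤ) : dT x ≤ |x - n| := by
  by_cases h : n = round x
  · subst h; exact le_of_eq rfl
  · have h1 : |x - round x| ≤ 1 / 2 := abs_sub_round x
    have h2 : (1 : ℝ) ≤ |((round x : ℤ) : ℝ) - (n : ℝ)| := by
      have h0 : (1 : ℤ) ≤ |round x - n| := Int.one_le_abs (sub_ne_zero.mpr (Ne.symm h))
      exact_mod_cast h0
    have h3 : |((round x : ℤ) : ℝ) - (n : ℝ)| ≤ |x - n| + |x - round x| := by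
      calc |((round x : ℤ) : ℝ) - (n : ℝ)| = |(x - (n : ℝ)) - (x - ((round x : ℤ) : ℝ))| := by
            ring_nf
        _ ≤ |x - (n : ℝ)| + |x - ((round x : ℤ) : ℝ)| := abs_sub _ _
    unfold dT
    linarith

lemma mterm_le_N {N x : ℝ} (hN : 0 ≤ N) : mterm N x ≤ N := by
  unfold mterm
  split
  · exact le_rfl
  · exact min_le_left _ _

lemma mterm_nonneg {N x : ℝ} (hN : 0 ≤ N) (hx : 0 ≤ x) : 0 ≤ mterm N x := by
  unfold mterm
  split
  · exact hN
  · exact le_min hN (one_div_nonneg.mpr hx)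

lemma mterm_le_inv {N x y : ℝ} (hy : 0 < y) (hxy : y ≤ x) : mterm N x ≤ 1 / y := by
  have hx : x ≠ 0 := ne_of_gt (lt_of_lt_of_le hy hxy)
  unfold mterm
  rw [if_neg hx]
  exact le_trans (min_le_right _ _) (one_div_le_one_div_of_le hy hxy)

lemma harmonic_sum_le (q : ℕ) : ∑ m ∈ Finset.Icc 1 q, (1 : ℝ) / m ≤ 1 + Real.log q := by
  have h := harmonic_le_one_add_log q
  have heq : ((harmonic q : ℚ) : ℝ) = ∑ m ∈ Finset.Icc 1 q, (1 : ℝ) / m := by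
    rw [harmonic_eq_sum_Icc]
    push_cast
    simp [one_div]
  linarith [heq ▸ h]

/-- Sum of the comparison function over an interval of integers. -/
lemma sum_g_bound (q N : ℕ) (hq : 1 ≤ q) :
    ∑ w ∈ Finset.Icc (-(q : ℤ)) q,
      (if |w| ≤ 2 then (N : ℝ) else 3 * q / |(w : ℝ)|) ≤
      5 * N + 6 * q + 6 * q * Real.log q := by
  have hq0 : (0 : ℝ) < q := by exact_mod_cast hq
  set F : ℤ → ℝ := fun w => if w = 0 then 0 else 3 * q / |(w : ℝ)| with hF
  have hFnn : ∀ w : ℤ, 0 ≤ F w := by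
    intro w
    simp only [hF]
    split
    · exact le_rfl
    · positivity
  have hpt : ∀ w : ℤ, (if |w| ≤ 2 then (N : ℝ) else 3 * q / |(w : ℝ)|) ≤
      (if |w| ≤ 2 then (N : ℝ) else 0) + F w := by
    intro w
    by_cases h : |w| ≤ 2
    · simp only [if_pos h]
      linarith [hFnn w]
    · have hw0 : w ≠ 0 := by
        intro h0; subst h0; simp at h
      simp only [if_neg h, hF, if_neg hw0]
      linarith
  have hind : ∑ w ∈ Finset.Icc (-(q : ℤ)) q, (if |w| ≤ 2 then (N : ℝ) else 0) ≤ 5 * N := by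
    rw [← Finset.sum_filter]
    rw [Finset.sum_const]
    have hsub : (Finset.Icc (-(q : ℤ)) q).filter (fun w => |w| ≤ 2) ⊆ Finset.Icc (-2 : ℤ) 2 := by
      intro w hw
      simp only [Finset.mem_filter] at hw
      rw [Finset.mem_Icc]
      exact abs_le.mp hw.2
    have hcard : ((Finset.Icc (-(q : ℤ)) q).filter (fun w => |w| ≤ 2)).card ≤ 5 := by
      have h5 : (Finset.Icc (-2 : ℤ) 2).card = 5 := by decide
      have := Finset.card_le_card hsub
      omega
    rw [nsmul_eq_mul]
    have : (((Finset.Icc (-(q : ℤ)) q).filter (fun w => |w| ≤ 2)).card : ℝ) ≤ 5 := by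
      exact_mod_cast hcard
    nlinarith [Nat.cast_nonneg (α := ℝ) N]
  have hpos : ∑ w ∈ Finset.Icc (1 : ℤ) q, F w ≤ 3 * q * (1 + Real.log q) := by
    have hre : ∑ w ∈ Finset.Icc (1 : ℤ) q, F w = ∑ m ∈ Finset.Icc 1 q, 3 * (q : ℝ) / m := by
      refine Finset.sum_nbij' (i := Int.toNat) (j := fun m => (m : ℤ)) ?_ ?_ ?_ ?_ ?_
      · intro a ha
        simp only [Finset.mem_Icc] at ha ⊢
        omega
      · intro a ha
        simp only [Finset.mem_Icc] at ha ⊢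
        omega
      · intro a ha
        simp only [Finset.mem_Icc] at ha
        omega
      · intro a ha
        simp only [Finset.mem_Icc] at ha
        omega
      · intro a ha
        simp only [Finset.mem_Icc] at ha
        have ha0 : a ≠ 0 := by omega
        have hcast : ((a.toNat : ℕ) : ℝ) = (a : ℝ) := by
          have h' : (a.toNat : ℤ) = a := Int.toNat_of_nonneg (by omega)
          exact_mod_cast h'
        simp only [hF, if_neg ha0, hcast]
        rw [abs_of_pos (by exact_mod_cast (by omega : (0:ℤ) < a))]
    rw [hre]
    have : ∑ m ∈ Finset.Icc 1 q, 3 * (q : ℝ) / m = 3 * q * ∑ m ∈ Finset.Icc 1 q, (1 : ℝ) / m := by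
      rw [Finset.mul_sum]
      refine Finset.sum_congr rfl fun m _ => by ring
    rw [this]
    have h1 := harmonic_sum_le q
    nlinarith
  have hFsum : ∑ w ∈ Finset.Icc (-(q : ℤ)) q, F w ≤ 6 * q + 6 * q * Real.log q := by
    have hsplit : Finset.Icc (-(q : ℤ)) q = Finset.Icc (-(q : ℤ)) (-1) ∪ Finset.Icc 0 q := by
      ext w
      simp only [Finset.mem_Icc, Finset.mem_union]
      omega
    have hdisj : Disjoint (Finset.Icc (-(q : ℤ)) (-1)) (Finset.Icc (0 : ℤ) q) := by
      simp only [Finset.disjoint_left, Finset.mem_Icc]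
      intro w hw
      omega
    rw [hsplit, Finset.sum_union hdisj]
    have hneg : ∑ w ∈ Finset.Icc (-(q : ℤ)) (-1), F w = ∑ w ∈ Finset.Icc (1 : ℤ) q, F w := by
      refine Finset.sum_nbij' (i := fun w => -w) (j := fun w => -w) ?_ ?_ ?_ ?_ ?_
      · intro a ha; simp only [Finset.mem_Icc] at ha ⊢; omega
      · intro a ha; simp only [Finset.mem_Icc] at ha ⊢; omega
      · intro a _; ring
      · intro a _; ring
      · intro a _
        simp only [hF, Int.cast_neg, abs_neg, neg_eq_zero]
    have h0 : Finset.Icc (0 : ℤ) q = insert (0 : ℤ) (Finset.Icc (1 : ℤ) (q : ℤ)) := by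
      ext w
      simp only [Finset.mem_Icc, Finset.mem_insert]
      omega
    have hzero : F 0 = 0 := by simp [hF]
    rw [hneg, h0, Finset.sum_insert (by simp), hzero]
    linarith
  calc ∑ w ∈ Finset.Icc (-(q : ℤ)) q, (if |w| ≤ 2 then (N : ℝ) else 3 * q / |(w : ℝ)|)
      ≤ ∑ w ∈ Finset.Icc (-(q : ℤ)) q, ((if |w| ≤ 2 then (N : ℝ) else 0) + F w) :=
        Finset.sum_le_sum fun w _ => hpt w
    _ = (∑ w ∈ Finset.Icc (-(q : ℤ)) q, (if |w| ≤ 2 then (N : ℝ) else 0)) +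
        ∑ w ∈ Finset.Icc (-(q : ℤ)) q, F w := Finset.sum_add_distrib
    _ ≤ 5 * N + (6 * q + 6 * q * Real.log q) := add_le_add hind hFsum
    _ = 5 * N + 6 * q + 6 * q * Real.log q := by ring

set_option maxHeartbeats 2000000 in
/-- The sum over one block of length `q`. -/
lemma block_bound (p : ℤ) (q : ℕ) (hq : 1 ≤ q) (hpq : Int.gcd p q = 1)
    (δ : ℝ) (hδ : |δ| ≤ 1 / (q : ℝ) ^ 2) (N : ℕ) (k0 : ℕ) :
    ∑ s ∈ Finset.Ioc 0 q, mterm N (dT (((k0 + s : ℕ) : ℝ) * ((p : ℝ) / q + δ))) ≤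
      5 * N + 6 * q + 6 * q * Real.log q := by
  have hq0 : (0 : ℝ) < q := by exact_mod_cast hq
  set γ : ℝ := (k0 : ℝ) * δ with hγ
  set c0 : ℤ := ⌊(q : ℝ) * γ⌋ with hc0
  set c : ℝ := (q : ℝ) * γ - c0 with hc
  have hc_nonneg : 0 ≤ c := by
    rw [hc]
    exact sub_nonneg.mpr (Int.floor_le _)
  have hc_lt : c < 1 := by
    rw [hc]
    linarith [Int.lt_floor_add_one ((q : ℝ) * γ)]
  set x : ℕ → ℝ := fun s => ((k0 + s : ℕ) : ℝ) * p / q + γ with hx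
  set z : ℕ → ℤ := fun s => ((k0 + s : ℕ) : ℤ) * p + c0 - q * round (x s) with hz
  set g : ℤ → ℝ := fun w => if |w| ≤ 2 then (N : ℝ) else 3 * q / |(w : ℝ)| with hg
  have key : ∀ s : ℕ, ((z s : ℝ) + c) = (q : ℝ) * (x s - round (x s)) := by
    intro s
    simp only [hz, hx, hc]
    push_cast
    field_simp
    ring
  have hdTx : ∀ s : ℕ, dT (x s) = |(z s : ℝ) + c| / q := by
    intro s
    simp only [dT]
    rw [eq_div_iff (ne_of_gt hq0), key, abs_mul, abs_of_pos hq0]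
    ring
  have harg : ∀ s : ℕ, ((k0 + s : ℕ) : ℝ) * ((p : ℝ) / q + δ) = x s + (s : ℝ) * δ := by
    intro s
    simp only [hx, hγ]
    push_cast
    ring
  have hzbound : ∀ s : ℕ, z s ∈ Finset.Icc (-(q : ℤ)) q := by
    intro s
    have h1 : |(z s : ℝ) + c| ≤ q / 2 := by
      have h2 : dT (x s) ≤ 1 / 2 := abs_sub_round (x s)
      rw [hdTx s] at h2
      rw [div_le_iff₀ hq0] at h2
      linarith
    have h3 : |(z s : ℝ)| ≤ q / 2 + 1 := by
      have : |(z s : ℝ)| ≤ |(z s : ℝ) + c| + |c| := by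
        calc |(z s : ℝ)| = |((z s : ℝ) + c) + (-c)| := by ring_nf
          _ ≤ |(z s : ℝ) + c| + |(-c)| := abs_add_le _ _
          _ = |(z s : ℝ) + c| + |c| := by rw [abs_neg]
      have hcabs : |c| ≤ 1 := by
        rw [abs_of_nonneg hc_nonneg]; linarith
      linarith
    have h4 : |(z s : ℝ)| < q + 1 := by linarith
    have h5 : |z s| < (q : ℤ) + 1 := by
      rw [← Int.cast_abs] at h4
      exact_mod_cast h4
    rw [Finset.mem_Icc, ← abs_le]
    omega
  have hinj : ∀ s ∈ Finset.Ioc 0 q, ∀ t ∈ Finset.Ioc 0 q, z s = z t → s = t := by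
    intro s hs t ht hst
    simp only [Finset.mem_Ioc] at hs ht
    have h1 : ((s : ℤ) - t) * p = (q : ℤ) * (round (x s) - round (x t)) := by
      simp only [hz] at hst
      push_cast at hst
      linear_combination hst
    have hdvd : (q : ℤ) ∣ ((s : ℤ) - t) * p := ⟨round (x s) - round (x t), h1⟩
    have hco : IsCoprime (q : ℤ) p := (Int.isCoprime_iff_gcd_eq_one.mpr hpq).symm
    have h2 : (q : ℤ) ∣ ((s : ℤ) - t) := hco.dvd_of_dvd_mul_right hdvd
    have h3 : ((s : ℤ) - t) = 0 := by
      refine Int.eq_zero_of_abs_lt_dvd h2 ?_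
      rw [abs_lt]
      constructor <;> omega
    omega
  have main : ∀ s ∈ Finset.Ioc 0 q,
      mterm N (dT (((k0 + s : ℕ) : ℝ) * ((p : ℝ) / q + δ))) ≤ g (z s) := by
    intro s hs
    simp only [Finset.mem_Ioc] at hs
    simp only [hg]
    by_cases hcase : |z s| ≤ 2
    · rw [if_pos hcase]
      exact mterm_le_N (Nat.cast_nonneg N)
    · rw [if_neg hcase]
      push_neg at hcase
      have hz3 : (3 : ℝ) ≤ |((z s : ℤ) : ℝ)| := by
        rw [← Int.cast_abs]
        exact_mod_cast hcase
      have habs : |((z s : ℤ) : ℝ)| - 1 ≤ |(z s : ℝ) + c| := by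
        have h1 : |(z s : ℝ)| ≤ |(z s : ℝ) + c| + |c| := by
          calc |(z s : ℝ)| = |((z s : ℝ) + c) + (-c)| := by ring_nf
            _ ≤ |(z s : ℝ) + c| + |(-c)| := abs_add_le _ _
            _ = |(z s : ℝ) + c| + |c| := by rw [abs_neg]
        have h2 : |c| ≤ 1 := by rw [abs_of_nonneg hc_nonneg]; linarith
        linarith
      -- dT (x s) ≥ (|z|-1)/q ≥ 2/q
      have hdx : (|((z s : ℤ) : ℝ)| - 1) / q ≤ dT (x s) := by
        rw [hdTx s]
        gcongr
      have hdx2 : 2 / (q : ℝ) ≤ dT (x s) := by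
        have : (2 : ℝ) / q ≤ (|((z s : ℤ) : ℝ)| - 1) / q := by gcongr; linarith
        linarith
      have hsδ : |(s : ℝ) * δ| ≤ 1 / q := by
        rw [abs_mul, abs_of_nonneg (Nat.cast_nonneg s)]
        have hsq : (s : ℝ) ≤ q := by exact_mod_cast hs.2
        calc (s : ℝ) * |δ| ≤ (q : ℝ) * (1 / (q : ℝ) ^ 2) :=
              mul_le_mul hsq hδ (abs_nonneg δ) (le_of_lt hq0)
          _ = 1 / q := by
              field_simp
      have hlow : dT (x s) - |(s : ℝ) * δ| ≤ dT (x s + (s : ℝ) * δ) := by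
        have h1 : dT (x s) ≤ |x s - (round (x s + (s : ℝ) * δ) : ℤ)| :=
          dT_le_abs_sub _ _
        have h2 : |x s - ((round (x s + (s : ℝ) * δ) : ℤ) : ℝ)| ≤
            |x s + (s : ℝ) * δ - ((round (x s + (s : ℝ) * δ) : ℤ) : ℝ)| + |(s : ℝ) * δ| := by
          calc |x s - ((round (x s + (s : ℝ) * δ) : ℤ) : ℝ)|
              = |(x s + (s : ℝ) * δ - ((round (x s + (s : ℝ) * δ) : ℤ) : ℝ)) + (-((s : ℝ) * δ))| := by
                ring_nf
            _ ≤ |x s + (s : ℝ) * δ - ((round (x s + (s : ℝ) * δ) : ℤ) : ℝ)| + |(-((s : ℝ) * δ))| :=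
                abs_add_le _ _
            _ = |x s + (s : ℝ) * δ - ((round (x s + (s : ℝ) * δ) : ℤ) : ℝ)| + |(s : ℝ) * δ| := by
                rw [abs_neg]
        simp only [dT] at h1 h2 ⊢
        linarith
      rw [harg s]
      have hdx2' : 2 ≤ dT (x s) * q := by
        rw [div_le_iff₀ hq0] at hdx2
        exact hdx2
      have hhalf : dT (x s) / 2 ≤ dT (x s + (s : ℝ) * δ) := by
        have h9 : 1 / (q : ℝ) ≤ dT (x s) / 2 := by
          rw [div_le_div_iff₀ hq0 (by norm_num : (0:ℝ) < 2)]
          linarith [hdx2']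
        linarith [hlow, hsδ, h9]
      have hpos2 : (0 : ℝ) < dT (x s) / 2 := by
        have : (0 : ℝ) < 2 / (q : ℝ) := by positivity
        linarith
      calc mterm N (dT (x s + (s : ℝ) * δ)) ≤ 1 / (dT (x s) / 2) :=
            mterm_le_inv hpos2 hhalf
        _ = 2 / dT (x s) := by ring
        _ ≤ 2 / ((|((z s : ℤ) : ℝ)| - 1) / q) := by
            have hA : (0:ℝ) < (|((z s : ℤ) : ℝ)| - 1) / q := div_pos (by linarith) hq0
            exact div_le_div_of_nonneg_left (by norm_num) hA hdx
        _ = 2 * q / (|((z s : ℤ) : ℝ)| - 1) := by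
            rw [div_div_eq_mul_div]
        _ ≤ 3 * q / |((z s : ℤ) : ℝ)| := by
            rw [div_le_div_iff₀ (by linarith) (by linarith)]
            nlinarith [hq0.le]
  have hgnn : ∀ w : ℤ, 0 ≤ g w := by
    intro w
    simp only [hg]
    split
    · exact Nat.cast_nonneg N
    · positivity
  calc ∑ s ∈ Finset.Ioc 0 q, mterm N (dT (((k0 + s : ℕ) : ℝ) * ((p : ℝ) / q + δ)))
      ≤ ∑ s ∈ Finset.Ioc 0 q, g (z s) := Finset.sum_le_sum main
    _ = ∑ w ∈ (Finset.Ioc 0 q).image z, g w := (Finset.sum_image hinj).symm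
    _ ≤ ∑ w ∈ Finset.Icc (-(q : ℤ)) q, g w := by
        apply Finset.sum_le_sum_of_subset_of_nonneg
        · exact Finset.image_subset_iff.mpr fun s _ => hzbound s
        · intro w _ _
          exact hgnn w
    _ ≤ 5 * N + 6 * q + 6 * q * Real.log q := by
        simp only [hg]
        exact sum_g_bound q N hq


set_option maxHeartbeats 1000000 in
theorem stmt3 :
    ∃ C : ℝ, 0 < C ∧ ∀ (α : ℝ) (p : ℤ) (q : ℕ), 1 ≤ q → Int.gcd p q = 1 →
      |α - (p : ℝ) / q| ≤ 1 / (q : ℝ) ^ 2 →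
      ∀ H N : ℕ, 0 < H → 0 < N →
        ∑ k ∈ Finset.Icc 1 H, mterm N (dT ((k : ℝ) * α)) ≤
          C * ((H : ℝ) * N / q + H * Real.log q + N + q * Real.log q) := by
  refine ⟨100, by norm_num, ?_⟩
  intro α p q hq hpq happrox H N hH hN
  have hq0 : (0 : ℝ) < q := by exact_mod_cast hq
  obtain ⟨δ, hα, hδ⟩ : ∃ δ : ℝ, α = (p : ℝ) / q + δ ∧ |δ| ≤ 1 / (q : ℝ) ^ 2 :=
    ⟨α - (p : ℝ) / q, by ring, happrox⟩
  rw [hα]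
  set B : ℝ := 5 * N + 6 * q + 6 * q * Real.log q with hB
  have hlogq : 0 ≤ Real.log q := Real.log_nonneg (by exact_mod_cast hq)
  have hBnn : (0 : ℝ) ≤ B := by
    have : (0 : ℝ) ≤ (N : ℝ) := Nat.cast_nonneg N
    nlinarith
  have blocks : ∀ J : ℕ, ∑ k ∈ Finset.Ioc 0 (J * q),
      mterm N (dT ((k : ℝ) * ((p : ℝ) / q + δ))) ≤ J * B := by
    intro J
    induction J with
    | zero => simp
    | succ J ih =>
      have h1 : J * q ≤ (J + 1) * q := Nat.mul_le_mul_right q (Nat.le_succ J)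
      rw [← Finset.sum_Ioc_consecutive _ (Nat.zero_le (J * q)) h1]
      have hmap : Finset.Ioc (J * q) ((J + 1) * q) =
          (Finset.Ioc 0 q).map (addLeftEmbedding (J * q)) := by
        rw [Finset.map_add_left_Ioc]
        congr 1 <;> ring
      rw [hmap, Finset.sum_map]
      have hblk := block_bound p q hq hpq δ hδ N (J * q)
      have heq : ∀ s ∈ Finset.Ioc 0 q,
          mterm N (dT (((addLeftEmbedding (J * q)) s : ℝ) * ((p : ℝ) / q + δ))) =
          mterm N (dT (((J * q + s : ℕ) : ℝ) * ((p : ℝ) / q + δ))) := by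
        intro s _
        simp [addLeftEmbedding_apply]
      rw [Finset.sum_congr rfl heq]
      push_cast at hblk ⊢
      linarith
  set J : ℕ := H / q + 1 with hJ
  have hq1 : 0 < q := hq
  have hHle : H ≤ J * q := by
    have h1 : H < H / q * q + q := Nat.lt_div_mul_add hq1
    have h2 : J * q = H / q * q + q := by rw [hJ]; ring
    omega
  have step1 : ∑ k ∈ Finset.Icc 1 H, mterm N (dT ((k : ℝ) * ((p : ℝ) / q + δ))) ≤
      ∑ k ∈ Finset.Ioc 0 (J * q), mterm N (dT ((k : ℝ) * ((p : ℝ) / q + δ))) := by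
    have hIcc : Finset.Icc 1 H = Finset.Ioc 0 H := rfl
    rw [hIcc]
    apply Finset.sum_le_sum_of_subset_of_nonneg (Finset.Ioc_subset_Ioc_right hHle)
    intro k _ _
    exact mterm_nonneg (Nat.cast_nonneg N) (dT_nonneg _)
  have hJle : (J : ℝ) ≤ (H : ℝ) / q + 1 := by
    have h1 : ((H / q : ℕ) : ℝ) ≤ (H : ℝ) / q := Nat.cast_div_le
    simp only [hJ]
    push_cast
    linarith
  have step2 : (J : ℝ) * B ≤ ((H : ℝ) / q + 1) * B :=
    mul_le_mul_of_nonneg_right hJle hBnn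
  refine le_trans step1 (le_trans (blocks J) (le_trans step2 ?_))
  -- final numeric comparison
  have hH1 : (1 : ℝ) ≤ H := by exact_mod_cast hH
  have hN1 : (1 : ℝ) ≤ N := by exact_mod_cast hN
  have hq1' : (1 : ℝ) ≤ q := by exact_mod_cast hq
  set L : ℝ := Real.log q with hL
  set u : ℝ := (H : ℝ) / q with hu
  have huQ : u * q = H := by
    rw [hu]; field_simp
  have hun : u ≤ u * N := le_mul_of_one_le_right (by positivity) hN1
  have hexpand : ((H : ℝ) / q + 1) * B =
      5 * (u * N) + 6 * (H : ℝ) + 6 * (H : ℝ) * L + 5 * N + 6 * q + 6 * q * L := by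
    rw [hB, ← hu]
    have e1 : u * (6 * (q : ℝ)) = 6 * H := by rw [mul_comm (6:ℝ) (q:ℝ), ← mul_assoc, huQ]; ring
    have e2 : u * (6 * (q : ℝ) * L) = 6 * (H : ℝ) * L := by
      rw [show (6 : ℝ) * q * L = (6 * q) * L by ring, ← mul_assoc,
        show u * (6 * (q:ℝ)) = 6 * H from e1]
    nlinarith [e1, e2]
  rw [hexpand]
  have target : 6 * (H : ℝ) + 6 * (q : ℝ) ≤
      95 * (u * N) + 94 * ((H : ℝ) * L) + 95 * (N : ℝ) + 94 * ((q : ℝ) * L) := by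
    rcases le_or_gt (q : ℕ) 2 with hq2 | hq3
    · have hq2' : (q : ℝ) ≤ 2 := by exact_mod_cast hq2
      have hHu : (H : ℝ) ≤ 2 * u := by
        have hd : (H : ℝ) / 2 ≤ (H : ℝ) / q :=
          div_le_div_of_nonneg_left (by positivity) hq0 hq2'
        rw [hu]
        linarith
      have h6q : 6 * (q : ℝ) ≤ 12 * N := by nlinarith
      have hHL : 0 ≤ (H : ℝ) * L := by positivity
      have hqL : 0 ≤ (q : ℝ) * L := by positivity
      linarith
    · have hq3' : (3 : ℝ) ≤ q := by exact_mod_cast hq3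
      have hL1 : (1 : ℝ) ≤ L := by
        rw [hL, Real.le_log_iff_exp_le (by positivity)]
        have := Real.exp_one_lt_d9
        linarith
      have h1 : (H : ℝ) ≤ (H : ℝ) * L := le_mul_of_one_le_right (by positivity) hL1
      have h2 : (q : ℝ) ≤ (q : ℝ) * L := le_mul_of_one_le_right (by positivity) hL1
      have hun0 : 0 ≤ u * N := by positivity
      have hN0 : (0 : ℝ) ≤ N := by positivity
      linarith
  have hrhs : 100 * ((H : ℝ) * N / q + H * L + N + q * L) =
      100 * (u * N) + 100 * ((H : ℝ) * L) + 100 * (N : ℝ) + 100 * ((q : ℝ) * L) := by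
    rw [hu]; ring
  rw [hrhs]
  have hHL0 : 0 ≤ (H : ℝ) * L := by positivity
  have hqL0 : 0 ≤ (q : ℝ) * L := by positivity
  have hun0 : 0 ≤ u * N := by positivity
  have hN0 : (0 : ℝ) ≤ N := by positivity
  linarith
end

section
/- Suppose α ∈ DC(γ, τ) with γ > 0, τ > 1. Then for all positive integers H and N, ∑_{k=1}^{H} min(N, 1/‖kα‖_T) ≤ C·(γ^{-1/τ} H N^{1−1/τ} + H log N + N + N log N) for an absolute constant C. -/
set_option maxHeartbeats 1000000

open Real

/-- Diophantine condition `DC(γ, τ)`. -/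
def DC (γ τ α : ℝ) : Prop := ∀ k : ℤ, k ≠ 0 → γ / |(k : ℝ)| ^ τ ≤ dT (k * α)

lemma dT_le_half (x : ℝ) : dT x ≤ 1/2 := abs_sub_round x

lemma dT_le_int (x : ℝ) (z : ℤ) : dT x ≤ |x - z| := round_le x z

lemma dT_add_int (x : ℝ) (z : ℤ) : dT (x + z) = dT x := by
  unfold dT
  rw [round_add_intCast]
  push_cast
  ring_nf

lemma dT_lip (x y : ℝ) : dT x ≤ dT y + |x - y| := by
  have h1 : dT x ≤ |x - round y| := dT_le_int x (round y)
  have h2 : |x - ((round y : ℤ) : ℝ)| ≤ |x - y| + |y - ((round y : ℤ) : ℝ)| := by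
    have := abs_sub_le x y ((round y : ℤ) : ℝ); linarith
  unfold dT at *
  linarith

lemma dT_eq_min {y : ℝ} (h0 : 0 ≤ y) (h1 : y < 1) : dT y = min y (1 - y) := by
  unfold dT
  rw [abs_sub_round_eq_min, Int.fract_eq_self.mpr ⟨h0, h1⟩]

lemma mterm_le_left {N x : ℝ} : mterm N x ≤ N := by
  unfold mterm
  split
  · exact le_refl N
  · exact min_le_left _ _

lemma harmonic_le_log (n : ℕ) : ∑ m ∈ Finset.Icc 1 n, (1 / m : ℝ) ≤ 1 + Real.log n := by
  induction n with
  | zero => simp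
  | succ n ih =>
    rw [Finset.sum_Icc_succ_top (by omega)]
    rcases Nat.eq_zero_or_pos n with h | h
    · subst h; simp
    · have hn : (0:ℝ) < n := by positivity
      have key : Real.log n + 1/((n:ℝ)+1) ≤ Real.log (n+1) := by
        have hpos : (0:ℝ) < (n:ℝ)/((n:ℝ)+1) := by positivity
        have := Real.log_le_sub_one_of_pos hpos
        rw [Real.log_div (by positivity) (by positivity)] at this
        have h2 : (n:ℝ)/((n:ℝ)+1) - 1 = -(1/((n:ℝ)+1)) := by field_simp; ring
        linarith
      push_cast
      push_cast at ih
      linarith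

lemma block_bound_s4 (α : ℝ) (a : ℤ) (q N : ℕ) (hq : 0 < q) (hN : 0 < N) (hqN : q ≤ N)
    (hcop : Int.gcd a (q:ℤ) = 1) (hβ : |α - (a:ℝ) / q| ≤ 1 / ((N:ℝ) * q)) (j : ℕ) :
    ∑ r ∈ Finset.Icc 1 q, mterm N (dT (((j*q + r : ℕ) : ℝ) * α)) ≤
      4*(N:ℝ) + 4*q + 4*q*Real.log q := by
  have hqR : (0:ℝ) < q := by positivity
  have hq0 : ((q:ℝ)) ≠ 0 := by positivity
  have hNR : (0:ℝ) < N := by positivity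
  set β : ℝ := α - (a:ℝ) / q with hβdef
  set c : ℝ := ((j:ℝ)*(q:ℝ)) * β with hc
  set L : ℤ := ⌊(q:ℝ)*c⌋ with hL
  set φ : ℝ := Int.fract ((q:ℝ)*c) with hφ
  have hφ0 : 0 ≤ φ := Int.fract_nonneg _
  have hφ1 : φ < 1 := Int.fract_lt_one _
  have hLφ : (q:ℝ)*c = (L:ℝ) + φ := by
    rw [hφ, hL]
    exact (Int.floor_add_fract _).symm
  set m : ℕ → ℕ := fun r => (((r:ℤ)*a + L) % (q:ℤ)).toNat with hm
  have hqZ : ((q:ℤ)) ≠ 0 := by exact_mod_cast hq.ne'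
  have hm_cast : ∀ r : ℕ, ((m r : ℤ)) = ((r:ℤ)*a + L) % (q:ℤ) := by
    intro r
    exact Int.toNat_of_nonneg (Int.emod_nonneg _ hqZ)
  have hm_lt : ∀ r : ℕ, m r < q := by
    intro r
    have h1 : ((r:ℤ)*a + L) % (q:ℤ) < (q:ℤ) := Int.emod_lt_of_pos _ (by exact_mod_cast hq)
    have h2 := hm_cast r
    omega
  set G : ℕ → ℝ := fun x => if x ≤ 1 then (N:ℝ) else 2*(q:ℝ)/x with hG
  have hGnn : ∀ x, 0 ≤ G x := by
    intro x
    simp only [hG]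
    split
    · positivity
    · positivity
  -- the key pointwise bound
  have key : ∀ r ∈ Finset.Icc 1 q,
      mterm N (dT (((j*q + r : ℕ) : ℝ) * α)) ≤ G (min (m r) (q - 1 - m r)) := by
    intro r hr
    obtain ⟨hr1, hrq⟩ := Finset.mem_Icc.mp hr
    set x₀ : ℝ := (r:ℝ)*((a:ℝ)/q) + ((j:ℝ)*(q:ℝ))*β with hx0
    have e1 : (((j*q + r : ℕ)) : ℝ)*α = (x₀ + (r:ℝ)*β) + (((j:ℤ)*a : ℤ) : ℝ) := by
      rw [hx0, hβdef]
      push_cast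
      field_simp
      ring
    have e2 : dT ((((j*q + r : ℕ)) : ℝ)*α) = dT (x₀ + (r:ℝ)*β) := by
      rw [e1, dT_add_int]
    have hβq : |β| ≤ 1 / ((N:ℝ)*q) := hβ
    have hrβ : |(r:ℝ)*β| ≤ 1/(N:ℝ) := by
      rw [abs_mul, abs_of_nonneg (by positivity : (0:ℝ) ≤ (r:ℝ))]
      have h1 : (r:ℝ) ≤ (q:ℝ) := by exact_mod_cast hrq
      calc (r:ℝ)*|β| ≤ (q:ℝ)*|β| := by gcongr
        _ ≤ (q:ℝ) * (1/((N:ℝ)*q)) := by gcongr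
        _ = 1/(N:ℝ) := by field_simp <;> ring
    have e3 : (q:ℝ) * x₀ = (r:ℝ)*(a:ℝ) + (q:ℝ)*c := by
      rw [hx0, hc]
      field_simp
    set s : ℤ := ((r:ℤ)*a + L) / (q:ℤ) with hs
    have e4 : ((r:ℤ)*a + L) = (q:ℤ) * s + (m r : ℤ) := by
      rw [hm_cast r, hs]
      exact (Int.mul_ediv_add_emod _ _).symm
    have e4' : (r:ℝ)*(a:ℝ) + (L:ℝ) = (q:ℝ)*(s:ℝ) + ((m r : ℕ):ℝ) := by
      exact_mod_cast congrArg (Int.cast : ℤ → ℝ) e4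
    have e5 : x₀ = (((m r : ℕ):ℝ) + φ)/(q:ℝ) + ((s:ℤ):ℝ) := by
      have h2 : (q:ℝ)*((((m r : ℕ):ℝ) + φ)/(q:ℝ) + ((s:ℤ):ℝ))
          = (((m r : ℕ):ℝ) + φ) + (q:ℝ)*((s:ℤ):ℝ) := by
        field_simp
      refine mul_left_cancel₀ hq0 ?_
      rw [h2]
      linarith [e3, hLφ, e4']
    have e6 : dT x₀ = dT ((((m r : ℕ):ℝ) + φ)/(q:ℝ)) := by
      conv_lhs => rw [e5]
      rw [dT_add_int]
    set μ : ℕ := min (m r) (q - 1 - m r) with hμ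
    have hmlt := hm_lt r
    have hy0 : 0 ≤ (((m r : ℕ):ℝ) + φ)/(q:ℝ) := by positivity
    have hy1 : (((m r : ℕ):ℝ) + φ)/(q:ℝ) < 1 := by
      rw [div_lt_one hqR]
      have h1 : ((m r : ℕ):ℝ) ≤ (q:ℝ) - 1 := by
        have : (m r) + 1 ≤ q := hmlt
        have := (Nat.cast_le (α := ℝ)).mpr this
        push_cast at this
        linarith
      linarith
    have hcastsub : ((q - 1 - m r : ℕ):ℝ) = (q:ℝ) - 1 - ((m r : ℕ):ℝ) := by
      have h1 : m r ≤ q - 1 := by omega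
      have h2 : 1 ≤ q := hq
      push_cast [Nat.cast_sub h1, Nat.cast_sub h2]
      ring
    have hdTy : (μ:ℝ)/(q:ℝ) ≤ dT ((((m r : ℕ):ℝ) + φ)/(q:ℝ)) := by
      rw [dT_eq_min hy0 hy1]
      apply le_min
      · have h1 : (μ:ℝ) ≤ ((m r : ℕ):ℝ) := by exact_mod_cast min_le_left _ _
        calc (μ:ℝ)/(q:ℝ) ≤ (((m r : ℕ):ℝ))/(q:ℝ) := by gcongr
          _ ≤ (((m r : ℕ):ℝ) + φ)/(q:ℝ) := by gcongr; linarith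
      · have h1 : (μ:ℝ) ≤ (q:ℝ) - 1 - ((m r : ℕ):ℝ) := by
          rw [← hcastsub]
          exact_mod_cast min_le_right _ _
        rw [le_sub_iff_add_le, ← add_div, div_le_one hqR]
        linarith
    have hlow : (μ:ℝ)/(q:ℝ) - 1/(N:ℝ) ≤ dT ((((j*q + r : ℕ)) : ℝ)*α) := by
      rw [e2]
      have hl := dT_lip x₀ (x₀ + (r:ℝ)*β)
      have habs : |x₀ - (x₀ + (r:ℝ)*β)| = |(r:ℝ)*β| := by
        rw [show x₀ - (x₀ + (r:ℝ)*β) = -((r:ℝ)*β) by ring, abs_neg]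
      rw [habs] at hl
      rw [e6] at hl
      linarith
    rcases le_or_gt μ 1 with hμ1 | hμ2
    · have hGμ : G μ = (N:ℝ) := if_pos hμ1
      rw [hGμ]
      exact mterm_le_left
    · have hμ2' : (2:ℝ) ≤ (μ:ℝ) := by exact_mod_cast hμ2
      have hqN' : (q:ℝ) ≤ (N:ℝ) := by exact_mod_cast hqN
      have h2q : 1/(N:ℝ) ≤ (μ:ℝ)/(2*(q:ℝ)) := by
        rw [div_le_div_iff₀ hNR (by positivity)]
        calc (1:ℝ)*(2*(q:ℝ)) = 2*(q:ℝ) := by ring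
          _ ≤ (μ:ℝ)*(N:ℝ) := mul_le_mul hμ2' hqN' hqR.le (by positivity)
      have hlow2 : (μ:ℝ)/(2*(q:ℝ)) ≤ dT ((((j*q + r : ℕ)) : ℝ)*α) := by
        have h3 : (μ:ℝ)/(q:ℝ) - (μ:ℝ)/(2*(q:ℝ)) = (μ:ℝ)/(2*(q:ℝ)) := by
          field_simp
          ring
        linarith
      have hpos : (0:ℝ) < (μ:ℝ)/(2*(q:ℝ)) := by positivity
      have hne : dT ((((j*q + r : ℕ)) : ℝ)*α) ≠ 0 := by
        have := lt_of_lt_of_le hpos hlow2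
        exact ne_of_gt this
      have hGμ : G μ = 2*(q:ℝ)/(μ:ℝ) := by
        simp only [hG]
        rw [if_neg (by omega)]
      rw [hGμ]
      unfold mterm
      rw [if_neg hne]
      calc min (N:ℝ) (1/dT ((((j*q + r : ℕ)) : ℝ)*α)) ≤ 1/dT ((((j*q + r : ℕ)) : ℝ)*α) :=
            min_le_right _ _
        _ ≤ 1/((μ:ℝ)/(2*(q:ℝ))) := by
            apply one_div_le_one_div_of_le hpos hlow2
        _ = 2*(q:ℝ)/(μ:ℝ) := by
            rw [one_div_div]
  -- injectivity of m on Icc 1 q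
  have hinj : Set.InjOn m (Finset.Icc 1 q) := by
    intro r1 h1 r2 h2 heq
    simp only [Finset.coe_Icc, Set.mem_Icc] at h1 h2
    have e1 : ((r1:ℤ)*a + L) % (q:ℤ) = ((r2:ℤ)*a + L) % (q:ℤ) := by
      rw [← hm_cast r1, ← hm_cast r2, heq]
    have e2 : (r1:ℤ)*a ≡ (r2:ℤ)*a [ZMOD (q:ℤ)] := by
      have : ((r1:ℤ)*a + L) ≡ ((r2:ℤ)*a + L) [ZMOD (q:ℤ)] := e1
      exact this.add_right_cancel' L
    have e3 : (r1:ℤ) ≡ (r2:ℤ) [ZMOD (q:ℤ)] := by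
      have h := Int.ModEq.cancel_right_div_gcd (by exact_mod_cast hq : (0:ℤ) < (q:ℤ)) e2
      rwa [Int.gcd_comm, hcop, Nat.cast_one, Int.ediv_one] at h
    have e4 : ((q:ℤ)) ∣ (r2:ℤ) - (r1:ℤ) := Int.ModEq.dvd e3
    have e5 : (r2:ℤ) - (r1:ℤ) = 0 := by
      apply Int.eq_zero_of_abs_lt_dvd e4
      rw [abs_lt]
      constructor
      · have : (1:ℤ) ≤ r1 := by exact_mod_cast h1.1
        have : (r2:ℤ) ≥ 1 := by exact_mod_cast h2.1
        have h3 : (r1:ℤ) ≤ q := by exact_mod_cast h1.2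
        omega
      · have : (1:ℤ) ≤ r1 := by exact_mod_cast h1.1
        have h3 : (r2:ℤ) ≤ q := by exact_mod_cast h2.2
        omega
    have : (r1:ℤ) = r2 := by omega
    exact_mod_cast this
  have hGsum : ∑ x ∈ Finset.range q, G x ≤ 2*(N:ℝ) + 2*(q:ℝ)*(1 + Real.log q) := by
    rw [← Finset.sum_filter_add_sum_filter_not (Finset.range q) (fun x => x ≤ 1)]
    have hA : ∑ x ∈ (Finset.range q).filter (fun x => x ≤ 1), G x ≤ 2*(N:ℝ) := by
      have hsub : (Finset.range q).filter (fun x => x ≤ 1) ⊆ Finset.range 2 := by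
        intro x hx
        simp only [Finset.mem_filter, Finset.mem_range] at hx ⊢
        omega
      have hc : ((Finset.range q).filter (fun x => x ≤ 1)).card ≤ 2 := by
        have := Finset.card_le_card hsub
        simpa using this
      calc ∑ x ∈ (Finset.range q).filter (fun x => x ≤ 1), G x
          = ∑ _x ∈ (Finset.range q).filter (fun x => x ≤ 1), (N:ℝ) := by
            apply Finset.sum_congr rfl
            intro x hx
            simp only [Finset.mem_filter] at hx
            simp only [hG]
            rw [if_pos hx.2]
        _ = (((Finset.range q).filter (fun x => x ≤ 1)).card : ℝ) * (N:ℝ) := by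
            rw [Finset.sum_const, nsmul_eq_mul]
        _ ≤ 2*(N:ℝ) := by
            have hc' : (((Finset.range q).filter (fun x => x ≤ 1)).card : ℝ) ≤ 2 := by
              exact_mod_cast hc
            exact mul_le_mul_of_nonneg_right hc' hNR.le
    have hB : ∑ x ∈ (Finset.range q).filter (fun x => ¬ x ≤ 1), G x
        ≤ 2*(q:ℝ)*(1 + Real.log q) := by
      calc ∑ x ∈ (Finset.range q).filter (fun x => ¬ x ≤ 1), G x
          = ∑ x ∈ (Finset.range q).filter (fun x => ¬ x ≤ 1), 2*(q:ℝ)*(1/(x:ℝ)) := by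
            apply Finset.sum_congr rfl
            intro x hx
            simp only [Finset.mem_filter] at hx
            simp only [hG]
            rw [if_neg hx.2]
            ring
        _ ≤ ∑ x ∈ Finset.Icc 1 q, 2*(q:ℝ)*(1/(x:ℝ)) := by
            apply Finset.sum_le_sum_of_subset_of_nonneg
            · intro x hx
              simp only [Finset.mem_filter, Finset.mem_range] at hx
              exact Finset.mem_Icc.mpr ⟨by omega, by omega⟩
            · intro x _ _
              positivity
        _ = 2*(q:ℝ) * ∑ x ∈ Finset.Icc 1 q, (1/(x:ℝ)) := by
            rw [Finset.mul_sum]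
        _ ≤ 2*(q:ℝ)*(1 + Real.log q) :=
            mul_le_mul_of_nonneg_left (harmonic_le_log q) (by positivity)
    linarith
  calc ∑ r ∈ Finset.Icc 1 q, mterm N (dT (((j*q + r : ℕ) : ℝ) * α))
      ≤ ∑ r ∈ Finset.Icc 1 q, G (min (m r) (q - 1 - m r)) := Finset.sum_le_sum key
    _ = ∑ x ∈ (Finset.Icc 1 q).image m, G (min x (q - 1 - x)) := by
        rw [Finset.sum_image (fun x hx y hy hxy => hinj hx hy hxy)]
    _ ≤ ∑ x ∈ Finset.range q, G (min x (q - 1 - x)) := by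
        apply Finset.sum_le_sum_of_subset_of_nonneg
        · intro x hx
          obtain ⟨r, _, rfl⟩ := Finset.mem_image.mp hx
          exact Finset.mem_range.mpr (hm_lt r)
        · intro x _ _
          exact hGnn _
    _ ≤ ∑ x ∈ Finset.range q, (G x + G (q - 1 - x)) := by
        apply Finset.sum_le_sum
        intro x _
        rcases le_total x (q - 1 - x) with h | h
        · rw [min_eq_left h]; exact le_add_of_nonneg_right (hGnn _)
        · rw [min_eq_right h]; exact le_add_of_nonneg_left (hGnn _)
    _ = 2 * ∑ x ∈ Finset.range q, G x := by
        rw [Finset.sum_add_distrib, Finset.sum_range_reflect (fun x => G x) q]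
        ring
    _ ≤ 2 * (2*(N:ℝ) + 2*(q:ℝ)*(1 + Real.log q)) := by linarith
    _ = 4*(N:ℝ) + 4*q + 4*q*Real.log q := by ring

theorem stmt4 :
    ∃ C : ℝ, 0 < C ∧ ∀ (γ τ α : ℝ), 0 < γ → 1 < τ → DC γ τ α →
      ∀ H N : ℕ, 0 < H → 0 < N →
        ∑ k ∈ Finset.Icc 1 H, mterm N (dT ((k : ℝ) * α)) ≤
          C * (γ ^ (-(1 / τ)) * H * (N : ℝ) ^ (1 - 1 / τ) + H * Real.log N + N
            + N * Real.log N) := by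
  refine ⟨100, by norm_num, ?_⟩
  intro γ τ α hγ hτ hDC H N hH hN
  have hτ0 : (0:ℝ) < τ := by linarith
  have hNR : (0:ℝ) < N := by positivity
  have hHR : (0:ℝ) < H := by positivity
  have hN1 : (1:ℝ) ≤ N := by exact_mod_cast hN
  have hγ1 : γ ≤ 1 := by
    have h := hDC 1 one_ne_zero
    simp only [Int.cast_one, abs_one, Real.one_rpow, div_one, one_mul] at h
    have := dT_le_half α
    linarith
  -- Dirichlet approximation
  obtain ⟨b, hb1, hb2⟩ := Real.exists_rat_abs_sub_le_and_den_le α hN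
  set q : ℕ := b.den with hqdef
  set a : ℤ := b.num with hadef
  have hq : 0 < q := b.pos
  have hqR : (0:ℝ) < q := by positivity
  have hqN : q ≤ N := hb2
  have hqNR : (q:ℝ) ≤ (N:ℝ) := by exact_mod_cast hqN
  have hbcast : (b:ℝ) = (a:ℝ)/q := by rw [Rat.cast_def]
  have hβ : |α - (a:ℝ)/q| ≤ 1/((N:ℝ)*q) := by
    rw [← hbcast]
    refine hb1.trans ?_
    apply one_div_le_one_div_of_le (by positivity)
    push_cast
    nlinarith
  have hcop : Int.gcd a (q:ℤ) = 1 := by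
    have h := b.reduced
    simpa [Int.gcd, Int.natAbs_natCast] using h
  -- lower bound on q
  have hdTq : dT ((q:ℝ)*α) ≤ 1/(N:ℝ) := by
    have h1 : dT ((q:ℝ)*α) ≤ |(q:ℝ)*α - ((a:ℤ):ℝ)| := dT_le_int _ a
    have h2 : |(q:ℝ)*α - ((a:ℤ):ℝ)| = (q:ℝ) * |α - (a:ℝ)/q| := by
      rw [← abs_of_pos hqR, ← abs_mul]
      congr 1
      field_simp
      rw [abs_of_pos hqR]; ring
    calc dT ((q:ℝ)*α) ≤ (q:ℝ)*|α - (a:ℝ)/q| := by rw [← h2]; exact h1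
      _ ≤ (q:ℝ)*(1/((N:ℝ)*q)) := by gcongr
      _ = 1/(N:ℝ) := by
          field_simp
  have hDCq := hDC (q:ℤ) (by exact_mod_cast hq.ne')
  have hq_rpow : γ/(q:ℝ)^τ ≤ 1/(N:ℝ) := by
    push_cast at hDCq
    rw [abs_of_pos hqR] at hDCq
    exact hDCq.trans hdTq
  have hγN : γ*(N:ℝ) ≤ (q:ℝ)^τ := by
    have hqτpos : (0:ℝ) < (q:ℝ)^τ := Real.rpow_pos_of_pos hqR τ
    rw [div_le_div_iff₀ hqτpos hNR] at hq_rpow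
    linarith
  have hq_low : (γ*(N:ℝ))^((1:ℝ)/τ) ≤ (q:ℝ) := by
    have h := Real.rpow_le_rpow (by positivity) hγN (by positivity : (0:ℝ) ≤ 1/τ)
    rwa [← Real.rpow_mul hqR.le, mul_one_div_cancel hτ0.ne', Real.rpow_one] at h
  -- covering the sum by blocks
  set J : ℕ := (H-1)/q + 1 with hJ
  set f : ℕ → ℝ := fun k => mterm N (dT ((k:ℝ)*α)) with hf
  have hfnn : ∀ k, 0 ≤ f k := fun k => mterm_nonneg hNR.le (dT_nonneg _)
  have div_eq : ∀ jj rr : ℕ, 1 ≤ rr → rr ≤ q → (jj*q + rr - 1)/q = jj := by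
    intro jj rr h1 h2
    rw [Nat.add_sub_assoc h1, Nat.add_comm, Nat.mul_comm, Nat.add_mul_div_left _ _ hq,
      Nat.div_eq_of_lt (by omega), Nat.zero_add]
  have cover : ∑ k ∈ Finset.Icc 1 H, f k
      ≤ ∑ j ∈ Finset.range J, ∑ r ∈ Finset.Icc 1 q, f (j*q + r) := by
    set e : ℕ×ℕ → ℕ := fun p => p.1*q + p.2 with he
    have hinj : ∀ p1 ∈ Finset.range J ×ˢ Finset.Icc 1 q,
        ∀ p2 ∈ Finset.range J ×ˢ Finset.Icc 1 q, e p1 = e p2 → p1 = p2 := by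
      intro p1 hp1 p2 hp2 hpe
      simp only [Finset.mem_product, Finset.mem_range, Finset.mem_Icc] at hp1 hp2
      simp only [he] at hpe
      have h1 : p1.1 = p2.1 := by
        have d1 := div_eq p1.1 p1.2 hp1.2.1 hp1.2.2
        have d2 := div_eq p2.1 p2.2 hp2.2.1 hp2.2.2
        rw [← d1, ← d2, hpe]
      have h2 : p1.2 = p2.2 := by
        rw [h1] at hpe
        exact Nat.add_left_cancel hpe
      exact Prod.ext h1 h2
    have himg : Finset.Icc 1 H ⊆ (Finset.range J ×ˢ Finset.Icc 1 q).image e := by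
      intro k hk
      obtain ⟨hk1, hk2⟩ := Finset.mem_Icc.mp hk
      refine Finset.mem_image.mpr ⟨((k-1)/q, (k-1)%q + 1), ?_, ?_⟩
      · simp only [Finset.mem_product, Finset.mem_range, Finset.mem_Icc]
        refine ⟨?_, by omega, ?_⟩
        · have hle : (k-1)/q ≤ (H-1)/q := Nat.div_le_div_right (by omega)
          rw [hJ]
          exact Nat.lt_succ_of_le hle
        · have := Nat.mod_lt (k-1) hq
          omega
      · simp only [he]
        calc (k-1)/q * q + ((k-1)%q + 1) = ((k-1)/q * q + (k-1)%q) + 1 := by ring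
          _ = (k-1) + 1 := by rw [Nat.div_add_mod']
          _ = k := by omega
    calc ∑ k ∈ Finset.Icc 1 H, f k
        ≤ ∑ k ∈ (Finset.range J ×ˢ Finset.Icc 1 q).image e, f k :=
          Finset.sum_le_sum_of_subset_of_nonneg himg (fun k _ _ => hfnn k)
      _ = ∑ p ∈ Finset.range J ×ˢ Finset.Icc 1 q, f (e p) := Finset.sum_image hinj
      _ = ∑ j ∈ Finset.range J, ∑ r ∈ Finset.Icc 1 q, f (j*q + r) := Finset.sum_product _ _ _
  have blocks : ∑ j ∈ Finset.range J, ∑ r ∈ Finset.Icc 1 q, f (j*q + r)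
      ≤ (J:ℝ) * (4*(N:ℝ) + 4*q + 4*q*Real.log q) := by
    calc ∑ j ∈ Finset.range J, ∑ r ∈ Finset.Icc 1 q, f (j*q + r)
        ≤ ∑ _j ∈ Finset.range J, (4*(N:ℝ) + 4*q + 4*q*Real.log q) := by
          apply Finset.sum_le_sum
          intro j _
          exact block_bound_s4 α a q N hq hN hqN hcop hβ j
      _ = (J:ℝ) * (4*(N:ℝ) + 4*q + 4*q*Real.log q) := by
          rw [Finset.sum_const, Finset.card_range, nsmul_eq_mul]
  have hlogq0 : (0:ℝ) ≤ Real.log q := Real.log_nonneg (by exact_mod_cast hq)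
  have hlogN0 : (0:ℝ) ≤ Real.log N := Real.log_nonneg hN1
  have hT0 : (0:ℝ) ≤ 4*(N:ℝ) + 4*q + 4*q*Real.log q := by
    have h1 : (0:ℝ) ≤ 4*(q:ℝ)*Real.log q := by positivity
    positivity
  have hJle : (J:ℝ) ≤ (H:ℝ)/q + 1 := by
    have h1 : ((((H-1)/q : ℕ)):ℝ) ≤ ((H-1 : ℕ):ℝ)/(q:ℝ) := Nat.cast_div_le
    have h2 : ((H-1 : ℕ):ℝ) ≤ (H:ℝ) := by
      exact_mod_cast Nat.sub_le H 1
    have h3 : ((H-1 : ℕ):ℝ)/(q:ℝ) ≤ (H:ℝ)/q := by gcongr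
    rw [hJ]
    push_cast
    linarith
  have main1 : ∑ k ∈ Finset.Icc 1 H, f k
      ≤ ((H:ℝ)/q + 1) * (4*(N:ℝ) + 4*q + 4*q*Real.log q) :=
    le_trans (le_trans cover blocks) (mul_le_mul_of_nonneg_right hJle hT0)
  have expand : ((H:ℝ)/q + 1) * (4*(N:ℝ) + 4*q + 4*q*Real.log q)
      = 4*((H:ℝ)*N/q) + 4*(H:ℝ) + 4*(H:ℝ)*Real.log q + 4*(N:ℝ) + 4*(q:ℝ)
        + 4*(q:ℝ)*Real.log q := by
    field_simp
    ring
  -- comparison facts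
  have hγA : (1:ℝ) ≤ γ^(-(1/τ)) :=
    Real.one_le_rpow_of_pos_of_le_one_of_nonpos hγ hγ1 (neg_nonpos.mpr (by positivity))
  have hNA : (1:ℝ) ≤ (N:ℝ)^(1-1/τ) := by
    apply Real.one_le_rpow hN1
    have h : 1/τ ≤ 1 := by
      rw [div_le_one hτ0]
      linarith
    linarith
  have hApos : (0:ℝ) ≤ γ^(-(1/τ)) * (H:ℝ) * (N:ℝ)^(1-1/τ) := by positivity
  have hxy : (1:ℝ) ≤ γ^(-(1/τ)) * (N:ℝ)^(1-1/τ) :=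
    le_trans hγA (le_mul_of_one_le_right (by positivity) hNA)
  have F2 : (H:ℝ) ≤ γ^(-(1/τ)) * (H:ℝ) * (N:ℝ)^(1-1/τ) := by
    calc (H:ℝ) = 1*(H:ℝ) := by ring
      _ ≤ (γ^(-(1/τ)) * (N:ℝ)^(1-1/τ))*(H:ℝ) := mul_le_mul_of_nonneg_right hxy hHR.le
      _ = γ^(-(1/τ)) * (H:ℝ) * (N:ℝ)^(1-1/τ) := by ring
  have hNq : (N:ℝ)/q ≤ γ^(-(1/τ)) * (N:ℝ)^(1-1/τ) := by
    have hpos : (0:ℝ) < (γ*(N:ℝ))^((1:ℝ)/τ) := Real.rpow_pos_of_pos (by positivity) _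
    have h1 : (N:ℝ)/q ≤ (N:ℝ)/((γ*(N:ℝ))^((1:ℝ)/τ)) := by gcongr
    have h2 : (N:ℝ)/((γ*(N:ℝ))^((1:ℝ)/τ)) = γ^(-(1/τ)) * (N:ℝ)^(1-1/τ) := by
      rw [Real.mul_rpow hγ.le hNR.le, Real.rpow_neg hγ.le, Real.rpow_sub hNR, Real.rpow_one]
      ring
    linarith
  have F1 : (H:ℝ)*(N:ℝ)/q ≤ γ^(-(1/τ)) * (H:ℝ) * (N:ℝ)^(1-1/τ) := by
    have h := mul_le_mul_of_nonneg_left hNq hHR.le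
    calc (H:ℝ)*(N:ℝ)/q = (H:ℝ) * ((N:ℝ)/q) := by ring
      _ ≤ (H:ℝ) * (γ^(-(1/τ)) * (N:ℝ)^(1-1/τ)) := h
      _ = γ^(-(1/τ)) * (H:ℝ) * (N:ℝ)^(1-1/τ) := by ring
  have hlogqN : Real.log q ≤ Real.log N := Real.log_le_log hqR hqNR
  have F3 : (H:ℝ)*Real.log q ≤ (H:ℝ)*Real.log N := mul_le_mul_of_nonneg_left hlogqN hHR.le
  have F5 : (q:ℝ)*Real.log q ≤ (N:ℝ)*Real.log N := mul_le_mul hqNR hlogqN hlogq0 hNR.le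
  have F7 : (0:ℝ) ≤ (H:ℝ)*Real.log N := by positivity
  have F8 : (0:ℝ) ≤ (N:ℝ)*Real.log N := by positivity
  calc ∑ k ∈ Finset.Icc 1 H, f k
      ≤ ((H:ℝ)/q + 1) * (4*(N:ℝ) + 4*q + 4*q*Real.log q) := main1
    _ = 4*((H:ℝ)*N/q) + 4*(H:ℝ) + 4*(H:ℝ)*Real.log q + 4*(N:ℝ) + 4*(q:ℝ)
        + 4*(q:ℝ)*Real.log q := expand
    _ ≤ 100 * (γ^(-(1/τ)) * (H:ℝ) * (N:ℝ)^(1-1/τ) + (H:ℝ)*Real.log N + (N:ℝ)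
        + (N:ℝ)*Real.log N) := by linarith
end

section
/- Let x_1, …, x_N be points in the b-dimensional torus T^b, let ε > 0, and R = ⌊ε^{-1}/10⌋ ≥ 1. Let χ_ε denote the indicator of the set {x ∈ T^b : ‖x‖_{T^b} < ε}, where ‖x‖_{T^b} = max_j ‖x_j‖_T. Then ∑_{n=1}^N χ_ε(x_n) ≤ C(b)·R^{-b}·∑_{k ∈ Z^b, ‖k‖_∞ < R} |∑_{n=1}^N e^{2πi⟨k, x_n⟩}|, where C(b) depends only on b. -/
open Real

noncomputable def ee (t : ℝ) : ℂ := Complex.exp (2 * π * Complex.I * t)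

lemma ee_re (t : ℝ) : (ee t).re = Real.cos (2 * π * t) := by
  have h : (2 * (π:ℂ) * Complex.I * t) = ((2 * π * t : ℝ) : ℂ) * Complex.I := by
    push_cast; ring
  rw [ee, h, Complex.exp_ofReal_mul_I_re]

lemma ee_mul_conj (a c : ℝ) : ee a * (starRingEnd ℂ) (ee c) = ee (a - c) := by
  rw [ee, ee, ee, ← Complex.exp_conj, ← Complex.exp_add]
  congr 1
  simp only [map_mul, Complex.conj_I, Complex.conj_ofReal, map_ofNat]
  push_cast
  ring

lemma ee_sum {ι : Type*} (s : Finset ι) (f : ι → ℝ) :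
    ee (∑ j ∈ s, f j) = ∏ j ∈ s, ee (f j) := by
  rw [ee]
  have h : (2 * (π:ℂ) * Complex.I * ((∑ j ∈ s, f j : ℝ) : ℂ)) =
      ∑ j ∈ s, 2 * (π:ℂ) * Complex.I * (f j : ℂ) := by
    rw [show ((∑ j ∈ s, f j : ℝ) : ℂ) = ∑ j ∈ s, ((f j : ℝ) : ℂ) by push_cast; rfl,
      Finset.mul_sum]
  rw [h, Complex.exp_sum]
  rfl

theorem stmt6 (b : ℕ) (hb : 0 < b) :
    ∃ C : ℝ, 0 < C ∧ ∀ (N : ℕ) (x : Fin N → Fin b → ℝ) (ε : ℝ), 0 < ε →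
      ∀ R : ℤ, R = ⌊ε⁻¹ / 10⌋ → 1 ≤ R →
        (∑ n : Fin N, (if ∀ j, dT (x n j) < ε then (1 : ℝ) else 0)) ≤
          C * ((R : ℝ) ^ b)⁻¹ *
            ∑ k ∈ Fintype.piFinset (fun _ : Fin b => Finset.Ioo (-R) R),
              ‖∑ n : Fin N,
                Complex.exp (2 * π * Complex.I * ((∑ j, (k j : ℝ) * x n j : ℝ) : ℂ))‖ := by
  refine ⟨4 ^ b, by positivity, ?_⟩
  intro N x ε hε R hR hR1
  have hRpos : (0:ℝ) < (R:ℝ) := by exact_mod_cast lt_of_lt_of_le one_pos hR1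
  have hRne : ((R:ℝ)) ≠ 0 := ne_of_gt hRpos
  -- ε ≤ 1/(10R)
  have hfloor : (R:ℝ) ≤ ε⁻¹ / 10 := by rw [hR]; exact Int.floor_le _
  have hεR : ε * (R:ℝ) ≤ 1 / 10 := by
    have h10 : 10 * (R:ℝ) ≤ ε⁻¹ := by linarith
    have : ε * (10 * (R:ℝ)) ≤ ε * ε⁻¹ := by
      apply mul_le_mul_of_nonneg_left h10 (le_of_lt hε)
    rw [mul_inv_cancel₀ (ne_of_gt hε)] at this
    linarith
  -- definitions
  set S : (Fin b → ℤ) → ℂ := fun k => ∑ n, ee (∑ j, (k j : ℝ) * x n j) with hS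
  set D : ℝ → ℂ := fun z => ∑ m ∈ Finset.Ico (0:ℤ) R, ee ((m:ℝ) * z) with hDdef
  set T : Fin N → ℂ := fun n => ∏ j, D (x n j) with hTdef
  set P : Finset (Fin b → ℤ) := Fintype.piFinset fun _ : Fin b => Finset.Ico (0:ℤ) R with hP
  set box : Finset (Fin b → ℤ) := Fintype.piFinset fun _ : Fin b => Finset.Ioo (-R) R with hbox
  have hcardIco : (Finset.Ico (0:ℤ) R).card = R.toNat := by
    rw [Int.card_Ico]; simp
  have hcardR : ((R.toNat : ℝ)) = (R:ℝ) := by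
    exact_mod_cast congrArg (Int.cast : ℤ → ℝ) (Int.toNat_of_nonneg (le_trans zero_le_one hR1))
  -- lower bound for D
  have hD : ∀ z : ℝ, dT z < ε → (R:ℝ)/2 ≤ ‖D z‖ := by
    intro z hz
    have hre : (R:ℝ)/2 ≤ (D z).re := by
      have : (D z).re = ∑ m ∈ Finset.Ico (0:ℤ) R, (ee ((m:ℝ) * z)).re := by
        rw [hDdef]; exact Complex.re_sum _ _
      rw [this]
      have hterm : ∀ m ∈ Finset.Ico (0:ℤ) R, (1:ℝ)/2 ≤ (ee ((m:ℝ) * z)).re := by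
        intro m hm
        rw [Finset.mem_Ico] at hm
        rw [ee_re]
        set y : ℝ := z - round z with hy
        have hcos : Real.cos (2 * π * ((m:ℝ) * z)) = Real.cos (2 * π * ((m:ℝ) * y)) := by
          have : 2 * π * ((m:ℝ) * z) = 2 * π * ((m:ℝ) * y) + ((m * round z : ℤ) : ℝ) * (2 * π) := by
            push_cast; ring
          rw [this, Real.cos_add_int_mul_two_pi]
        rw [hcos]
        have habs : |2 * π * ((m:ℝ) * y)| ≤ π/3 := by
          have hmnn : (0:ℝ) ≤ (m:ℝ) := by exact_mod_cast hm.1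
          have hmR : (m:ℝ) ≤ (R:ℝ) := by exact_mod_cast le_of_lt hm.2
          have hyε : |y| < ε := hz
          have h1 : |2 * π * ((m:ℝ) * y)| = 2 * π * ((m:ℝ) * |y|) := by
            rw [abs_mul, abs_mul, abs_mul,
              abs_of_nonneg (by norm_num : (0:ℝ) ≤ 2),
              abs_of_nonneg Real.pi_pos.le, abs_of_nonneg hmnn]
          rw [h1]
          have h2 : (m:ℝ) * |y| ≤ (R:ℝ) * ε :=
            mul_le_mul hmR (le_of_lt hyε) (abs_nonneg _) (le_of_lt hRpos)
          have h3 : (R:ℝ) * ε ≤ 1/10 := by rw [mul_comm]; exact hεR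
          have : 2 * π * ((m:ℝ) * |y|) ≤ 2 * π * (1/10) := by
            apply mul_le_mul_of_nonneg_left (le_trans h2 h3) (by positivity)
          linarith [Real.pi_pos]
        calc (1:ℝ)/2 = Real.cos (π/3) := by rw [Real.cos_pi_div_three]
          _ ≤ Real.cos |2 * π * ((m:ℝ) * y)| := by
              apply Real.cos_le_cos_of_nonneg_of_le_pi (abs_nonneg _)
              · linarith [Real.pi_pos]
              · exact habs
          _ = Real.cos (2 * π * ((m:ℝ) * y)) := Real.cos_abs _
      calc (R:ℝ)/2 = (R.toNat : ℝ) * (1/2) := by rw [hcardR]; ring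
        _ = (Finset.Ico (0:ℤ) R).card * (1/2) := by rw [hcardIco]
        _ ≤ ∑ m ∈ Finset.Ico (0:ℤ) R, (ee ((m:ℝ) * z)).re := by
            rw [← nsmul_eq_mul, ← Finset.sum_const]
            exact Finset.sum_le_sum hterm
    calc (R:ℝ)/2 ≤ (D z).re := hre
      _ ≤ ‖D z‖ := Complex.re_le_norm _
  -- T as a sum over P
  have hT : ∀ n, T n = ∑ m ∈ P, ee (∑ j, ((m j : ℤ):ℝ) * x n j) := by
    intro n
    rw [hTdef]
    simp only
    rw [Finset.prod_univ_sum]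
    apply Finset.sum_congr rfl
    intro m _
    rw [ee_sum]
  -- key1
  have key1 : (∑ n : Fin N, (if ∀ j, dT (x n j) < ε then (1 : ℝ) else 0)) * (((R:ℝ)/2)^b)^2
      ≤ ∑ n, ‖T n‖^2 := by
    rw [Finset.sum_mul]
    apply Finset.sum_le_sum
    intro n _
    by_cases h : ∀ j, dT (x n j) < ε
    · rw [if_pos h, one_mul]
      have hnorm : ((R:ℝ)/2)^b ≤ ‖T n‖ := by
        rw [hTdef]
        simp only
        rw [norm_prod]
        calc ((R:ℝ)/2)^b = ∏ _j : Fin b, (R:ℝ)/2 := by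
              rw [Finset.prod_const, Finset.card_univ, Fintype.card_fin]
          _ ≤ ∏ j, ‖D (x n j)‖ := by
              apply Finset.prod_le_prod
              · intro i _; positivity
              · intro i _; exact hD _ (h i)
      have h0 : (0:ℝ) ≤ ((R:ℝ)/2)^b := by positivity
      exact pow_le_pow_left₀ h0 hnorm 2
    · rw [if_neg h, zero_mul]; positivity
  -- key2 : sum of squares as Fourier sum
  have hsq : ∀ z : ℂ, ‖z‖^2 = (z * (starRingEnd ℂ) z).re := by
    intro z
    rw [Complex.mul_conj, Complex.ofReal_re, Complex.normSq_eq_norm_sq]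
  have key2 : ∑ n, ‖T n‖^2 = (∑ p ∈ P ×ˢ P, S (p.1 - p.2)).re := by
    have hTT : ∀ n, T n * (starRingEnd ℂ) (T n)
        = ∑ p ∈ P ×ˢ P, ee (∑ j, (((p.1 - p.2) j : ℤ):ℝ) * x n j) := by
      intro n
      rw [hT n, map_sum, Finset.sum_mul_sum, ← Finset.sum_product']
      apply Finset.sum_congr rfl
      intro p _
      rw [ee_mul_conj]
      congr 1
      rw [← Finset.sum_sub_distrib]
      apply Finset.sum_congr rfl
      intro j _
      have : ((p.1 - p.2) j : ℤ) = p.1 j - p.2 j := rfl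
      rw [this]
      push_cast
      ring
    calc ∑ n, ‖T n‖^2 = ∑ n, (T n * (starRingEnd ℂ) (T n)).re := by
          apply Finset.sum_congr rfl; intro n _; exact hsq _
      _ = (∑ n, T n * (starRingEnd ℂ) (T n)).re := (Complex.re_sum _ _).symm
      _ = (∑ p ∈ P ×ˢ P, S (p.1 - p.2)).re := by
          congr 1
          rw [Finset.sum_congr rfl (fun n _ => hTT n), Finset.sum_comm]
  -- key3
  have key3 : (∑ p ∈ P ×ˢ P, S (p.1 - p.2)).re ≤ ∑ p ∈ P ×ˢ P, ‖S (p.1 - p.2)‖ := by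
    rw [Complex.re_sum]
    apply Finset.sum_le_sum
    intro p _
    exact Complex.re_le_norm _
  -- key4 : counting
  have key4 : ∑ p ∈ P ×ˢ P, ‖S (p.1 - p.2)‖ ≤ (R:ℝ)^b * ∑ k ∈ box, ‖S k‖ := by
    have hmaps : ∀ p ∈ P ×ˢ P, p.1 - p.2 ∈ box := by
      intro p hp
      rw [Finset.mem_product] at hp
      rw [hbox, Fintype.mem_piFinset]
      intro j
      have h1 := (Fintype.mem_piFinset.mp hp.1) j
      have h2 := (Fintype.mem_piFinset.mp hp.2) j
      rw [Finset.mem_Ico] at h1 h2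
      rw [Finset.mem_Ioo]
      constructor
      · have : (p.1 - p.2) j = p.1 j - p.2 j := rfl
        omega
      · have : (p.1 - p.2) j = p.1 j - p.2 j := rfl
        omega
    rw [← Finset.sum_fiberwise_of_maps_to hmaps (fun p => ‖S (p.1 - p.2)‖)]
    rw [Finset.mul_sum]
    apply Finset.sum_le_sum
    intro k hk
    have hfib : ∀ p ∈ (P ×ˢ P).filter (fun p => p.1 - p.2 = k), ‖S (p.1 - p.2)‖ = ‖S k‖ := by
      intro p hp
      rw [Finset.mem_filter] at hp
      rw [hp.2]
    rw [Finset.sum_congr rfl hfib, Finset.sum_const, nsmul_eq_mul]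
    apply mul_le_mul_of_nonneg_right _ (norm_nonneg _)
    have hcard : ((P ×ˢ P).filter (fun p => p.1 - p.2 = k)).card ≤ P.card := by
      apply Finset.card_le_card_of_injOn (fun p => p.1)
      · intro p hp
        rw [Finset.mem_coe, Finset.mem_filter, Finset.mem_product] at hp
        exact hp.1.1
      · intro p hp q hq hpq
        rw [Finset.mem_coe, Finset.mem_filter] at hp hq
        have hp2 : p.2 = p.1 - k := by rw [← hp.2]; abel
        have hq2 : q.2 = q.1 - k := by rw [← hq.2]; abel
        have h1 : p.1 = q.1 := hpq
        exact Prod.ext h1 (by rw [hp2, hq2, h1])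
    have hPcard : (P.card : ℝ) = (R:ℝ)^b := by
      rw [hP, Fintype.card_piFinset]
      simp only [hcardIco, Finset.prod_const, Finset.card_univ, Fintype.card_fin]
      push_cast [hcardR]
      rfl
    calc (((P ×ˢ P).filter (fun p => p.1 - p.2 = k)).card : ℝ) ≤ (P.card : ℝ) := by
          exact_mod_cast hcard
      _ = (R:ℝ)^b := hPcard
  -- combine
  have hSgoal : (∑ k ∈ box, ‖S k‖)
      = ∑ k ∈ Fintype.piFinset (fun _ : Fin b => Finset.Ioo (-R) R),
          ‖∑ n : Fin N, Complex.exp (2 * π * Complex.I * ((∑ j, (k j : ℝ) * x n j : ℝ) : ℂ))‖ := by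
    rfl
  set Sig : ℝ := ∑ k ∈ box, ‖S k‖ with hSig
  have hchain : (∑ n : Fin N, (if ∀ j, dT (x n j) < ε then (1 : ℝ) else 0)) * (((R:ℝ)/2)^b)^2
      ≤ (R:ℝ)^b * Sig := by
    calc _ ≤ ∑ n, ‖T n‖^2 := key1
      _ = (∑ p ∈ P ×ˢ P, S (p.1 - p.2)).re := key2
      _ ≤ ∑ p ∈ P ×ˢ P, ‖S (p.1 - p.2)‖ := key3
      _ ≤ (R:ℝ)^b * Sig := key4
  have hApos : (0:ℝ) < (((R:ℝ)/2)^b)^2 := by positivity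
  rw [← le_div_iff₀ hApos] at hchain
  refine le_trans hchain (le_of_eq ?_)
  have hRbne : ((R:ℝ))^b ≠ 0 := by positivity
  have hgen : ∀ s : ℝ, (R:ℝ)^b * s / (((R:ℝ)/2)^b)^2 = 4^b * ((R:ℝ)^b)⁻¹ * s := by
    intro s
    field_simp
    rw [show (4:ℝ)^b = 2^(b*2) by
      rw [show (4:ℝ) = 2^2 by norm_num, ← pow_mul, mul_comm]]
    ring_nf
    rw [mul_assoc (_ * s), ← mul_pow]; norm_num
  exact hgen Sig
end
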